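/- Let F : ℝ → ℝ be continuous and suppose y satisfies y'(σ) = F(σ) + v(σ) with v continuous. Fix a time t. Then the sliding-window estimate F_est(T) := -(6/T³) ∫₀ᵀ ((T - 2σ)·y(t - T + σ) + σ(T - σ)·v(t - T + σ)) dσ converges to F(t) as T → 0⁺. -/

import Mathlib

set_option maxHeartbeats 1000000


open MeasureTheory intervalIntegral Filter

theorem sliding_window_estimator_tendsto (F v y : ℝ → ℝ) (hF : Continuous F)
    (hv : Continuous v) (hy : ∀ σ, HasDerivAt y (F σ + v σ) σ) (t : ℝ) :
    Tendsto
      (fun T : ℝ => -(6 / T ^ 3) *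
        ∫ σ in (0:ℝ)..T,
          ((T - 2 * σ) * y (t - T + σ) + σ * (T - σ) * v (t - T + σ)))
      (nhdsWithin 0 (Set.Ioi 0)) (nhds (F t)) := by
  have hycont : Continuous y := by
    rw [continuous_iff_continuousAt]; exact fun x => (hy x).continuousAt
  -- integration by parts identity
  have key : ∀ T : ℝ,
      (∫ σ in (0:ℝ)..T, ((T - 2 * σ) * y (t - T + σ) + σ * (T - σ) * v (t - T + σ)))
        = - ∫ σ in (0:ℝ)..T, σ * (T - σ) * F (t - T + σ) := by
    intro T
    have hderiv : ∀ σ : ℝ, HasDerivAt (fun s => s * (T - s) * y (t - T + s))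
        ((T - 2 * σ) * y (t - T + σ) + σ * (T - σ) * v (t - T + σ)
          + σ * (T - σ) * F (t - T + σ)) σ := by
      intro σ
      have h1 : HasDerivAt (fun s : ℝ => s * (T - s)) (T - 2 * σ) σ := by
        have := (hasDerivAt_id σ).mul ((hasDerivAt_const σ T).sub (hasDerivAt_id σ))
        exact this.congr_deriv (by show 1 * (T - σ) + σ * (0 - 1) = T - 2 * σ; ring)
      have h2 : HasDerivAt (fun s => y (t - T + s)) (F (t - T + σ) + v (t - T + σ)) σ := by
        have hi : HasDerivAt (fun s : ℝ => t - T + s) 1 σ := (hasDerivAt_id σ).const_add (t - T)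
        have := (hy (t - T + σ)).comp σ hi
        exact this.congr_deriv (by ring)
      have := h1.mul h2
      exact this.congr_deriv (by ring)
    have hc : ContinuousOn (fun σ : ℝ => (T - 2 * σ) * y (t - T + σ)
        + σ * (T - σ) * v (t - T + σ) + σ * (T - σ) * F (t - T + σ)) (Set.uIcc 0 T) :=
      (Continuous.continuousOn (by continuity))
    have heq := intervalIntegral.integral_eq_sub_of_hasDerivAt (fun σ _ => hderiv σ)
      (hc.intervalIntegrable)
    have heq0 : (∫ σ in (0:ℝ)..T, ((T - 2 * σ) * y (t - T + σ)
        + σ * (T - σ) * v (t - T + σ) + σ * (T - σ) * F (t - T + σ))) = 0 := by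
      rw [heq]; ring
    have i1 : IntervalIntegrable (fun σ : ℝ => (T - 2 * σ) * y (t - T + σ)
        + σ * (T - σ) * v (t - T + σ)) volume 0 T :=
      Continuous.intervalIntegrable (by continuity) 0 T
    have i2 : IntervalIntegrable (fun σ : ℝ => σ * (T - σ) * F (t - T + σ)) volume 0 T :=
      Continuous.intervalIntegrable (by continuity) 0 T
    have hsplit := intervalIntegral.integral_add i1 i2
    rw [hsplit] at heq0
    linarith
  -- weight integral
  have hweight : ∀ T : ℝ, (∫ σ in (0:ℝ)..T, σ * (T - σ)) = T ^ 3 / 6 := by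
    intro T
    have h : (fun σ : ℝ => σ * (T - σ)) = fun σ => T * σ - σ ^ 2 := by funext σ; ring
    have i1 : IntervalIntegrable (fun σ : ℝ => T * σ) volume 0 T :=
      Continuous.intervalIntegrable (by continuity) 0 T
    have i2 : IntervalIntegrable (fun σ : ℝ => σ ^ 2) volume 0 T :=
      Continuous.intervalIntegrable (by continuity) 0 T
    rw [h, intervalIntegral.integral_sub i1 i2,
      intervalIntegral.integral_const_mul, integral_id, integral_pow]
    push_cast
    ring
  rw [Metric.tendsto_nhdsWithin_nhds]
  intro ε hε
  obtain ⟨δ, hδ, hFδ⟩ := Metric.continuousAt_iff.mp hF.continuousAt (ε / 2) (by linarith)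
  refine ⟨δ, hδ, ?_⟩
  intro T hT hTδ
  have hT0 : 0 < T := hT
  have hT3 : (0:ℝ) < T ^ 3 := by positivity
  have hTlt : T < δ := by
    rwa [Real.dist_eq, sub_zero, abs_of_pos hT0] at hTδ
  -- rewrite the function value
  rw [key T, Real.dist_eq]
  have iF : IntervalIntegrable (fun σ : ℝ => σ * (T - σ) * F (t - T + σ)) volume 0 T :=
    Continuous.intervalIntegrable (by continuity) 0 T
  have iw : IntervalIntegrable (fun σ : ℝ => σ * (T - σ) * F t) volume 0 T :=
    Continuous.intervalIntegrable (by continuity) 0 T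
  have hD : (∫ σ in (0:ℝ)..T, σ * (T - σ) * (F (t - T + σ) - F t))
      = (∫ σ in (0:ℝ)..T, σ * (T - σ) * F (t - T + σ)) - T ^ 3 / 6 * F t := by
    have h : (fun σ : ℝ => σ * (T - σ) * (F (t - T + σ) - F t))
        = fun σ => σ * (T - σ) * F (t - T + σ) - σ * (T - σ) * F t := by funext σ; ring
    rw [h, intervalIntegral.integral_sub iF iw]
    congr 1
    rw [intervalIntegral.integral_mul_const, hweight T]
  -- bound the difference integral
  have hbound : |∫ σ in (0:ℝ)..T, σ * (T - σ) * (F (t - T + σ) - F t)|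
      ≤ T ^ 2 / 4 * (ε / 2) * |T - 0| := by
    have := intervalIntegral.norm_integral_le_of_norm_le_const
      (C := T ^ 2 / 4 * (ε / 2))
      (f := fun σ : ℝ => σ * (T - σ) * (F (t - T + σ) - F t)) (a := 0) (b := T) ?_
    · simpa using this
    · intro x hx
      rw [Set.uIoc_of_le hT0.le] at hx
      obtain ⟨hx0, hxT⟩ := hx
      have hw0 : 0 ≤ x * (T - x) := mul_nonneg hx0.le (by linarith)
      have hw : x * (T - x) ≤ T ^ 2 / 4 := by nlinarith [sq_nonneg (T - 2 * x)]
      have hd : |F (t - T + x) - F t| ≤ ε / 2 := by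
        have : dist (t - T + x) t < δ := by
          rw [Real.dist_eq]
          rw [abs_of_nonpos (by linarith)]
          linarith
        have := hFδ this
        rw [Real.dist_eq] at this
        linarith
      rw [Real.norm_eq_abs, abs_mul, abs_of_nonneg hw0]
      exact mul_le_mul hw hd (abs_nonneg _) (by positivity)
  rw [sub_zero, abs_of_pos hT0] at hbound
  -- final computation
  have hrw : -(6 / T ^ 3) * -(∫ σ in (0:ℝ)..T, σ * (T - σ) * F (t - T + σ)) - F t
      = 6 / T ^ 3 * (∫ σ in (0:ℝ)..T, σ * (T - σ) * (F (t - T + σ) - F t)) := by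
    rw [hD]
    field_simp
  rw [hrw, abs_mul, abs_of_pos (by positivity : (0:ℝ) < 6 / T ^ 3)]
  calc 6 / T ^ 3 * |∫ σ in (0:ℝ)..T, σ * (T - σ) * (F (t - T + σ) - F t)|
      ≤ 6 / T ^ 3 * (T ^ 2 / 4 * (ε / 2) * T) := by
        apply mul_le_mul_of_nonneg_left hbound (by positivity)
    _ = 3 / 4 * ε := by field_simp; ring
    _ < ε := by linarith
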